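/- For every prime p and every l ≥ 1, the matrix algebra Mat_l(𝔽_p) is generated as a unital ring by the two elements A = Σ_{i=1}^{l-1} e_{i,i+1} + (-1)^{l-1} e_{l,1} (the signed cyclic permutation matrix) and B = e_{1,2} (the matrix unit). -/

import Mathlib

open Matrix
open scoped Fin.CommRing

namespace Stmt14Aux

variable {p l : ℕ}

/-- The signed cyclic permutation matrix. -/
def Amat (p l : ℕ) : Matrix (Fin l) (Fin l) (ZMod p) :=
  Matrix.of fun i j =>
    if (i : ℕ) + 1 = (j : ℕ) then 1
    else if (i : ℕ) = l - 1 ∧ (j : ℕ) = 0 then (-1) ^ (l - 1) else 0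

/-- The matrix unit e_{1,2}. -/
def Bmat (p l : ℕ) : Matrix (Fin l) (Fin l) (ZMod p) :=
  Matrix.of fun i j => if (i : ℕ) = 0 ∧ (j : ℕ) = 1 then 1 else 0

lemma val_one_of_two_le [NeZero l] (hl : 2 ≤ l) : ((1 : Fin l) : ℕ) = 1 := by
  rw [Fin.val_one']; exact Nat.mod_eq_of_lt (by omega)

lemma sub_one_val [NeZero l] (hl : 2 ≤ l) (i : Fin l) :
    ((i - 1 : Fin l) : ℕ) = if (i : ℕ) = 0 then l - 1 else (i : ℕ) - 1 := by
  rw [Fin.sub_def, val_one_of_two_le hl]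
  show (l - 1 + (i : ℕ)) % l = _
  have := i.isLt
  rcases eq_or_ne (i : ℕ) 0 with h | h
  · rw [h, if_pos rfl, Nat.add_zero]; exact Nat.mod_eq_of_lt (by omega)
  · rw [if_neg h]
    have h2 : l - 1 + (i : ℕ) = l + ((i : ℕ) - 1) := by omega
    rw [h2, Nat.add_mod_left]; exact Nat.mod_eq_of_lt (by omega)

lemma add_one_val [NeZero l] (hl : 2 ≤ l) (j : Fin l) :
    ((j + 1 : Fin l) : ℕ) = if (j : ℕ) = l - 1 then 0 else (j : ℕ) + 1 := by
  rw [Fin.add_def, val_one_of_two_le hl]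
  show ((j : ℕ) + 1) % l = _
  have := j.isLt
  rcases eq_or_ne (j : ℕ) (l - 1) with h | h
  · rw [h, if_pos rfl]
    have h2 : l - 1 + 1 = l := by omega
    rw [h2, Nat.mod_self]
  · rw [if_neg h]; exact Nat.mod_eq_of_lt (by omega)

lemma A_mul_E [NeZero l] (hl : 2 ≤ l) (i j : Fin l) :
    Amat p l * Matrix.single i j 1 =
      (if (i : ℕ) = 0 then ((-1 : ZMod p)) ^ (l - 1) else 1) • Matrix.single (i - 1) j 1 := by
  ext r c
  have lhs : ((Amat p l * Matrix.single i j 1 : Matrix (Fin l) (Fin l) (ZMod p))) r c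
      = if j = c then Amat p l r i else 0 := by
    rw [Matrix.mul_apply]
    simp only [Matrix.single, Matrix.of_apply, mul_ite, mul_one, mul_zero, ite_and]
    rw [Finset.sum_ite_eq]
    simp
  have rhs : ((if (i : ℕ) = 0 then ((-1 : ZMod p)) ^ (l - 1) else 1)
        • Matrix.single (i - 1) j 1) r c
      = if (i - 1 = r ∧ j = c) then (if (i : ℕ) = 0 then ((-1 : ZMod p)) ^ (l - 1) else 1)
        else 0 := by
    simp only [Matrix.single, Matrix.smul_apply, Matrix.of_apply, smul_ite, smul_eq_mul,
      mul_one, mul_zero]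
    split_ifs <;> simp
  rw [lhs, rhs]
  by_cases hjc : j = c
  · simp only [hjc, if_pos rfl, and_true]
    have h4 := i.isLt; have h5 := r.isLt
    by_cases hd : i - 1 = r
    · rw [if_pos hd]
      have h3 : (r : ℕ) = if (i : ℕ) = 0 then l - 1 else (i : ℕ) - 1 := by
        rw [← sub_one_val hl, hd]
      simp only [Amat, Matrix.of_apply]
      split_ifs at h3 ⊢ <;> first | rfl | omega
    · rw [if_neg hd]
      have h3 : ¬ ((r : ℕ) = if (i : ℕ) = 0 then l - 1 else (i : ℕ) - 1) := by
        rw [← sub_one_val hl]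
        exact fun hc => hd (Fin.ext hc.symm)
      simp only [Amat, Matrix.of_apply]
      split_ifs at h3 ⊢ <;> first | rfl | omega
  · simp [hjc]

lemma E_mul_A [NeZero l] (hl : 2 ≤ l) (i j : Fin l) :
    Matrix.single i j 1 * Amat p l =
      (if (j : ℕ) = l - 1 then ((-1 : ZMod p)) ^ (l - 1) else 1) • Matrix.single i (j + 1) 1 := by
  ext r c
  have lhs : ((Matrix.single i j 1 * Amat p l : Matrix (Fin l) (Fin l) (ZMod p))) r c
      = if i = r then Amat p l j c else 0 := by
    rw [Matrix.mul_apply]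
    simp only [Matrix.single, Matrix.of_apply, ite_mul, one_mul, zero_mul, ite_and]
    by_cases hir : i = r
    · simp only [hir, if_pos rfl, if_true]
      rw [Finset.sum_ite_eq]
      simp
    · simp [hir]
  have rhs : ((if (j : ℕ) = l - 1 then ((-1 : ZMod p)) ^ (l - 1) else 1)
        • Matrix.single i (j + 1) 1) r c
      = if (i = r ∧ j + 1 = c) then (if (j : ℕ) = l - 1 then ((-1 : ZMod p)) ^ (l - 1) else 1)
        else 0 := by
    simp only [Matrix.single, Matrix.smul_apply, Matrix.of_apply, smul_ite, smul_eq_mul,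
      mul_one, mul_zero]
    split_ifs <;> simp
  rw [lhs, rhs]
  by_cases hir : i = r
  · simp only [hir, if_pos rfl, true_and]
    have h4 := j.isLt; have h5 := c.isLt
    by_cases hd : j + 1 = c
    · rw [if_pos hd]
      have h3 : (c : ℕ) = if (j : ℕ) = l - 1 then 0 else (j : ℕ) + 1 := by
        rw [← add_one_val hl, hd]
      simp only [Amat, Matrix.of_apply]
      split_ifs at h3 ⊢ <;> first | rfl | omega
    · rw [if_neg hd]
      have h3 : ¬ ((c : ℕ) = if (j : ℕ) = l - 1 then 0 else (j : ℕ) + 1) := by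
        rw [← add_one_val hl]
        exact fun hc => hd (Fin.ext hc.symm)
      simp only [Amat, Matrix.of_apply]
      split_ifs at h3 ⊢ <;> first | rfl | omega
  · simp [hir]

end Stmt14Aux

open Stmt14Aux in
theorem stmt_14 (p : ℕ) (hp : p.Prime) (l : ℕ) (hl : 1 ≤ l) :
    letI A : Matrix (Fin l) (Fin l) (ZMod p) := Matrix.of fun i j =>
      if (i : ℕ) + 1 = (j : ℕ) then 1
      else if (i : ℕ) = l - 1 ∧ (j : ℕ) = 0 then (-1) ^ (l - 1) else 0
    letI B : Matrix (Fin l) (Fin l) (ZMod p) := Matrix.of fun i j =>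
      if (i : ℕ) = 0 ∧ (j : ℕ) = 1 then 1 else 0
    Subring.closure {A, B} = ⊤ := by
  show Subring.closure {Amat p l, Bmat p l} = ⊤
  haveI : NeZero l := ⟨by omega⟩
  haveI : NeZero p := ⟨hp.ne_zero⟩
  set S : Subring (Matrix (Fin l) (Fin l) (ZMod p)) := Subring.closure {Amat p l, Bmat p l}
    with hS
  -- S is closed under scalar multiplication
  have hsmul : ∀ (c : ZMod p) (M : Matrix (Fin l) (Fin l) (ZMod p)), M ∈ S → c • M ∈ S := by
    intro c M hM
    have h : c • M = c.val • M := by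
      conv_lhs => rw [← ZMod.natCast_rightInverse c]
      exact Nat.cast_smul_eq_nsmul (ZMod p) c.val M
    rw [h]
    exact nsmul_mem hM _
  rcases eq_or_lt_of_le hl with h1 | h2
  · -- case l = 1 : everything is a scalar matrix
    rw [eq_top_iff]
    rintro M -
    set d : Fin l := ⟨0, by omega⟩
    have hall : ∀ x : Fin l, x = d := fun x => Fin.ext (by omega)
    have hM : M = (M d d) • (1 : Matrix (Fin l) (Fin l) (ZMod p)) := by
      ext r c
      rw [hall r, hall c]
      simp [Matrix.one_apply]
    rw [hM]
    exact hsmul _ _ (one_mem S)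
  · -- case 2 ≤ l
    have hl2 : 2 ≤ l := h2
    have hA : Amat p l ∈ S := Subring.subset_closure (Set.mem_insert _ _)
    have hB : Bmat p l ∈ S := Subring.subset_closure (Set.mem_insert_of_mem _ rfl)
    have hBE : Bmat p l = Matrix.single (0 : Fin l) (1 : Fin l) 1 := by
      ext r c
      simp only [Bmat, Matrix.single, Matrix.of_apply]
      refine if_congr ?_ rfl rfl
      rw [Fin.ext_iff, Fin.ext_iff, Fin.val_zero, val_one_of_two_le hl2]
      omega
    -- stepping lemmas
    have stepA : ∀ (i j : Fin l), (∃ c : ZMod p, IsUnit c ∧ c • Matrix.single i j 1 ∈ S) →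
        (∃ c : ZMod p, IsUnit c ∧ c • Matrix.single (i - 1) j 1 ∈ S) := by
      rintro i j ⟨c, hc, hm⟩
      refine ⟨c * (if (i : ℕ) = 0 then ((-1 : ZMod p)) ^ (l - 1) else 1), ?_, ?_⟩
      · refine IsUnit.mul hc ?_
        split_ifs
        · exact (isUnit_one.neg).pow _
        · exact isUnit_one
      · have hmem := S.mul_mem hA hm
        rwa [mul_smul_comm, A_mul_E hl2, smul_smul] at hmem
    have stepB : ∀ (i j : Fin l), (∃ c : ZMod p, IsUnit c ∧ c • Matrix.single i j 1 ∈ S) →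
        (∃ c : ZMod p, IsUnit c ∧ c • Matrix.single i (j + 1) 1 ∈ S) := by
      rintro i j ⟨c, hc, hm⟩
      refine ⟨c * (if (j : ℕ) = l - 1 then ((-1 : ZMod p)) ^ (l - 1) else 1), ?_, ?_⟩
      · refine IsUnit.mul hc ?_
        split_ifs
        · exact (isUnit_one.neg).pow _
        · exact isUnit_one
      · have hmem := S.mul_mem hm hA
        rwa [smul_mul_assoc, E_mul_A hl2, smul_smul] at hmem
    -- iterated stepping
    have iterA : ∀ (n : ℕ) (i j : Fin l), (∃ c : ZMod p, IsUnit c ∧ c • Matrix.single i j 1 ∈ S) →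
        (∃ c : ZMod p, IsUnit c ∧ c • Matrix.single (i - (n : Fin l)) j 1 ∈ S) := by
      intro n
      induction n with
      | zero => intro i j h; simpa using h
      | succ n ih =>
        intro i j h
        have hstep := stepA (i - (n : Fin l)) j (ih i j h)
        have hcast : (i - (n : Fin l)) - 1 = i - (((n + 1 : ℕ)) : Fin l) := by
          push_cast
          ring
        rwa [hcast] at hstep
    have iterB : ∀ (n : ℕ) (i j : Fin l), (∃ c : ZMod p, IsUnit c ∧ c • Matrix.single i j 1 ∈ S) →
        (∃ c : ZMod p, IsUnit c ∧ c • Matrix.single i (j + (n : Fin l)) 1 ∈ S) := by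
      intro n
      induction n with
      | zero => intro i j h; simpa using h
      | succ n ih =>
        intro i j h
        have hstep := stepB i (j + (n : Fin l)) (ih i j h)
        have hcast : (j + (n : Fin l)) + 1 = j + (((n + 1 : ℕ)) : Fin l) := by
          push_cast
          ring
        rwa [hcast] at hstep
    -- base case
    have base : ∃ c : ZMod p, IsUnit c ∧ c • Matrix.single (0 : Fin l) (1 : Fin l) 1 ∈ S :=
      ⟨1, isUnit_one, by rw [one_smul, ← hBE]; exact hB⟩
    -- all positions
    have hallE : ∀ (i j : Fin l), ∃ c : ZMod p, IsUnit c ∧ c • Matrix.single i j 1 ∈ S := by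
      intro i j
      have hcol : ∃ c : ZMod p, IsUnit c ∧ c • Matrix.single (0 : Fin l) j 1 ∈ S := by
        have := iterB ((j - 1 : Fin l) : ℕ) 0 1 base
        rwa [Fin.cast_val_eq_self, show (1 : Fin l) + (j - 1) = j from by ring] at this
      have := iterA (((0 : Fin l) - i : Fin l) : ℕ) 0 j hcol
      rwa [Fin.cast_val_eq_self, show (0 : Fin l) - (0 - i) = i from by ring] at this
    have hE : ∀ (i j : Fin l), Matrix.single i j 1 ∈ S := by
      intro i j
      obtain ⟨c, hc, hm⟩ := hallE i j
      obtain ⟨u, rfl⟩ := hc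
      have := hsmul (↑u⁻¹) _ hm
      rwa [smul_smul, Units.inv_mul, one_smul] at this
    rw [eq_top_iff]
    rintro M -
    rw [matrix_eq_sum_single M]
    refine sum_mem fun i _ => sum_mem fun j _ => ?_
    have h : Matrix.single i j (M i j) = (M i j) • Matrix.single i j 1 := by
      rw [smul_single, smul_eq_mul, mul_one]
    rw [h]
    exact hsmul _ _ (hE i j)
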